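/- There exists a minimal Markov basis B such that every move z ∈ B contains an indispensable monomial (i.e., z⁺ or z⁻ is an indispensable monomial) if and only if every fiber F_t of the minimum-fiber set B_MF contains at least one singleton B_{|t|−1}-equivalence class. -/

import Mathlib

open scoped BigOperators

section Defs

variable {ι κ : Type*} [Fintype ι]

/-- Embed a frequency vector `x ∈ ℕ^ι` into `ℤ^ι`. -/
def natToInt (x : ι → ℕ) : ι → ℤ := fun i => (x i : ℤ)

/-- The fiber of `t`: all frequency vectors `x` with `A x = t`. -/
def fiberOf (A : Matrix κ ι ℤ) (t : κ → ℤ) : Set (ι → ℕ) :=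
  {x | A.mulVec (natToInt x) = t}

/-- A move for `A`: an integer vector in the kernel of `A`. -/
def IsMove (A : Matrix κ ι ℤ) (z : ι → ℤ) : Prop := A.mulVec z = 0

/-- The positive part `z⁺` of an integer vector, as a frequency vector. -/
def posOf (z : ι → ℤ) : ι → ℕ := fun i => (z i).toNat

/-- The negative part `z⁻` of an integer vector, as a frequency vector. -/
def negOf (z : ι → ℤ) : ι → ℕ := fun i => (-z i).toNat

/-- The degree of a move: `deg z = |z⁺|`. -/
def degOf (z : ι → ℤ) : ℕ := ∑ i, posOf z i

/-- One step: add or subtract one move of `B`, staying in `ℕ^ι`. -/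
def MStep (B : Set (ι → ℤ)) (x y : ι → ℕ) : Prop :=
  ∃ z ∈ B, natToInt y = natToInt x + z ∨ natToInt y = natToInt x - z

/-- `y` is accessible from `x` by the moves of `B` (staying nonnegative throughout,
since all intermediate points are frequency vectors). -/
def Accessible (B : Set (ι → ℤ)) : (ι → ℕ) → (ι → ℕ) → Prop :=
  Relation.ReflTransGen (MStep B)

/-- A Markov basis: a finite set of moves such that every fiber forms a single
equivalence class for mutual accessibility. -/
def IsMarkovBasis (A : Matrix κ ι ℤ) (B : Set (ι → ℤ)) : Prop :=
  B.Finite ∧ (∀ z ∈ B, IsMove A z) ∧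
    ∀ t : κ → ℤ, ∀ x ∈ fiberOf A t, ∀ y ∈ fiberOf A t, Accessible B x y

/-- A minimal Markov basis: no proper subset is a Markov basis. -/
def IsMinimalMarkovBasis (A : Matrix κ ι ℤ) (B : Set (ι → ℤ)) : Prop :=
  IsMarkovBasis A B ∧ ∀ B' ⊂ B, ¬ IsMarkovBasis A B'

/-- An indispensable monomial: every Markov basis contains a move whose
positive or negative part is `x`. -/
def IsIndispensableMonomial (A : Matrix κ ι ℤ) (x : ι → ℕ) : Prop :=
  ∀ B : Set (ι → ℤ), IsMarkovBasis A B → ∃ z ∈ B, posOf z = x ∨ negOf z = x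

/-- `B_n`: the set of moves of degree at most `n`. -/
def Bmoves (A : Matrix κ ι ℤ) (n : ℕ) : Set (ι → ℤ) :=
  {z | IsMove A z ∧ degOf z ≤ n}

/-- The sample size `|t|` of a sufficient statistic `t` (well defined on nonempty
fibers under homogeneity). -/
noncomputable def sampleSize (A : Matrix κ ι ℤ) (t : κ → ℤ) : ℕ :=
  sInf {n | ∃ x ∈ fiberOf A t, ∑ i, x i = n}

/-- The `B_{|t|-1}`-equivalence classes of the fiber of `t`. -/
noncomputable def fiberClasses (A : Matrix κ ι ℤ) (t : κ → ℤ) : Set (Set (ι → ℕ)) :=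
  {C | ∃ x ∈ fiberOf A t,
    C = {y | y ∈ fiberOf A t ∧ Accessible (Bmoves A (sampleSize A t - 1)) x y}}

/-- Homogeneity: some rational vector `w` has `w ⬝ aᵢ = 1` for every column `aᵢ`. -/
def IsHomogeneousMatrix [Fintype κ] (A : Matrix κ ι ℤ) : Prop :=
  ∃ w : κ → ℚ, ∀ i : ι, ∑ j, w j * (A j i : ℚ) = 1

end Defs

/-- The minimum-fiber set `B_MF`: nonzero moves whose positive and negative parts are
not mutually accessible by moves of lower degree. -/
def BMF {p d : ℕ} (A : Matrix (Fin d) (Fin p) ℤ) : Set (Fin p → ℤ) :=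
  {z | IsMove A z ∧ z ≠ 0 ∧
    ¬ Accessible (Bmoves A (degOf z - 1)) (posOf z) (negOf z)}

namespace MProof

variable {p d : ℕ} {A : Matrix (Fin d) (Fin p) ℤ}


lemma natToInt_inj {x y : Fin p → ℕ} (h : natToInt x = natToInt y) : x = y := by
  funext i
  have := congrFun h i
  simpa [natToInt] using this

lemma natToInt_add (x y : Fin p → ℕ) : natToInt (x + y) = natToInt x + natToInt y := by
  funext i; simp [natToInt]

lemma posOf_sub_negOf (z : Fin p → ℤ) :
    natToInt (posOf z) - natToInt (negOf z) = z := by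
  funext i; simp only [natToInt, posOf, negOf, Pi.sub_apply]; omega

lemma negOf_neg (z : Fin p → ℤ) : negOf (-z) = posOf z := by
  funext i; simp [posOf, negOf]

lemma posOf_neg (z : Fin p → ℤ) : posOf (-z) = negOf z := by
  funext i; simp [posOf, negOf]

lemma posOf_natToInt_sub {x y : Fin p → ℕ} (h : ∀ i, x i = 0 ∨ y i = 0) :
    posOf (natToInt x - natToInt y) = x := by
  funext i; rcases h i with h | h <;> simp only [posOf, natToInt, Pi.sub_apply, h] <;> omega

lemma negOf_natToInt_sub {x y : Fin p → ℕ} (h : ∀ i, x i = 0 ∨ y i = 0) :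
    negOf (natToInt x - natToInt y) = y := by
  funext i; rcases h i with h | h <;> simp only [negOf, natToInt, Pi.sub_apply, h] <;> omega

lemma sum_eq_zero_of_move (hA : IsHomogeneousMatrix A) {z : Fin p → ℤ}
    (hz : IsMove A z) : ∑ i, z i = 0 := by
  obtain ⟨w, hw⟩ := hA
  have key : ∑ j, w j * ((A.mulVec z) j : ℚ) = ∑ i, (z i : ℚ) := by
    simp only [Matrix.mulVec, dotProduct]
    push_cast
    simp only [Finset.mul_sum]
    rw [Finset.sum_comm]
    refine Finset.sum_congr rfl fun i _ => ?_
    have : ∑ j, w j * ((A j i : ℚ) * (z i : ℚ)) = (∑ j, w j * (A j i : ℚ)) * (z i : ℚ) := by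
      rw [Finset.sum_mul]; refine Finset.sum_congr rfl fun j _ => by ring
    rw [this, hw i, one_mul]
  rw [hz] at key
  simp only [Pi.zero_apply, Int.cast_zero, mul_zero, Finset.sum_const_zero] at key
  have : ((∑ i, z i : ℤ) : ℚ) = 0 := by push_cast; exact key.symm
  exact_mod_cast this

lemma sum_eq_of_mulVec_eq (hA : IsHomogeneousMatrix A) {x y : Fin p → ℕ}
    (h : A.mulVec (natToInt x) = A.mulVec (natToInt y)) : ∑ i, x i = ∑ i, y i := by
  have hz : IsMove A (natToInt x - natToInt y) := by
    unfold IsMove; rw [Matrix.mulVec_sub, h, sub_self]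
  have h1 := sum_eq_zero_of_move hA hz
  have h2 : ∑ i, ((x i : ℤ) - (y i : ℤ)) = 0 := by
    simpa [natToInt] using h1
  rw [Finset.sum_sub_distrib] at h2
  have : (∑ i, x i : ℤ) = (∑ i, y i : ℤ) := by push_cast; linarith
  exact_mod_cast this

lemma degOf_eq_sum_negOf (hA : IsHomogeneousMatrix A) {z : Fin p → ℤ}
    (hz : IsMove A z) : degOf z = ∑ i, negOf z i := by
  have h0 := sum_eq_zero_of_move hA hz
  have h2 : ∑ i, ((posOf z i : ℤ) - (negOf z i : ℤ)) = 0 := by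
    rw [← h0]
    refine Finset.sum_congr rfl fun i _ => ?_
    simp only [posOf, negOf]; omega
  rw [Finset.sum_sub_distrib] at h2
  have : (∑ i, posOf z i : ℤ) = (∑ i, negOf z i : ℤ) := by push_cast at h2 ⊢; linarith
  exact_mod_cast this

lemma mstep_symm {B : Set (Fin p → ℤ)} {x y : Fin p → ℕ} (h : MStep B x y) : MStep B y x := by
  obtain ⟨z, hz, h | h⟩ := h
  · exact ⟨z, hz, Or.inr (by rw [h]; abel)⟩
  · exact ⟨z, hz, Or.inl (by rw [h]; abel)⟩

lemma accessible_symm {B : Set (Fin p → ℤ)} {x y : Fin p → ℕ}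
    (h : Accessible B x y) : Accessible B y x :=
  (@Relation.ReflTransGen.stdSymm _ (MStep B) ⟨fun _ _ hab => mstep_symm hab⟩).symm _ _ h

lemma accessible_mono {B B' : Set (Fin p → ℤ)} (h : B ⊆ B') {x y : Fin p → ℕ}
    (hx : Accessible B x y) : Accessible B' x y :=
  Relation.ReflTransGen.mono (r := MStep B) (p := MStep B') (fun _ _ (hab : MStep B _ _) => by
    obtain ⟨z, hz, hs⟩ := hab; exact ⟨z, h hz, hs⟩) _ _ hx

lemma mstep_mulVec {B : Set (Fin p → ℤ)} (hB : ∀ z ∈ B, IsMove A z) {x y : Fin p → ℕ}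
    (h : MStep B x y) : A.mulVec (natToInt x) = A.mulVec (natToInt y) := by
  obtain ⟨z, hz, h | h⟩ := h <;> rw [h]
  · rw [Matrix.mulVec_add, hB z hz, add_zero]
  · rw [Matrix.mulVec_sub, hB z hz, sub_zero]

lemma accessible_mulVec {B : Set (Fin p → ℤ)} (hB : ∀ z ∈ B, IsMove A z) {x y : Fin p → ℕ}
    (h : Accessible B x y) : A.mulVec (natToInt x) = A.mulVec (natToInt y) := by
  induction h with
  | refl => rfl
  | tail _ hstep ih => exact ih.trans (mstep_mulVec hB hstep)

lemma mstep_add_left {B : Set (Fin p → ℤ)} (r : Fin p → ℕ) {x y : Fin p → ℕ}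
    (h : MStep B x y) : MStep B (r + x) (r + y) := by
  obtain ⟨z, hz, h | h⟩ := h
  · exact ⟨z, hz, Or.inl (by rw [natToInt_add, natToInt_add, h]; abel)⟩
  · exact ⟨z, hz, Or.inr (by rw [natToInt_add, natToInt_add, h]; abel)⟩

lemma accessible_add_left {B : Set (Fin p → ℤ)} (r : Fin p → ℕ) {x y : Fin p → ℕ}
    (h : Accessible B x y) : Accessible B (r + x) (r + y) :=
  Relation.ReflTransGen.lift (r := MStep B) (p := MStep B) (fun v => r + v)
    (fun _ _ (hab : MStep B _ _) => mstep_add_left r hab) _ _ h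

lemma accessible_single {B : Set (Fin p → ℤ)} {z : Fin p → ℤ} (hz : z ∈ B) {x y : Fin p → ℕ}
    (h : natToInt y = natToInt x + z) : Accessible B x y :=
  Relation.ReflTransGen.single ⟨z, hz, Or.inl h⟩




lemma sampleSize_eq (hA : IsHomogeneousMatrix A) {t : Fin d → ℤ} {x : Fin p → ℕ}
    (hx : x ∈ fiberOf A t) : sampleSize A t = ∑ i, x i := by
  unfold sampleSize
  have hset : {n | ∃ y ∈ fiberOf A t, ∑ i, y i = n} = {∑ i, x i} := by
    ext n
    constructor
    · rintro ⟨y, hy, rfl⟩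
      exact sum_eq_of_mulVec_eq hA ((hy : _ = t).trans (hx : _ = t).symm)
    · rintro rfl
      exact ⟨x, hx, rfl⟩
  rw [hset, csInf_singleton]

lemma fiber_finite (hA : IsHomogeneousMatrix A) (t : Fin d → ℤ) : (fiberOf A t).Finite := by
  have hsub : fiberOf A t ⊆ Set.pi Set.univ (fun _ : Fin p => Set.Iic (sampleSize A t)) := by
    intro x hx i _
    have h1 : sampleSize A t = ∑ i, x i := sampleSize_eq hA hx
    have h2 : x i ≤ ∑ j, x j :=
      Finset.single_le_sum (f := x) (fun j _ => Nat.zero_le _) (Finset.mem_univ i)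
    simpa [Set.mem_Iic, h1] using h2
  exact (Set.Finite.pi fun _ => Set.finite_Iic _).subset hsub

lemma eq_of_le_of_sum_le {a b : Fin p → ℕ} (hle : ∀ i, a i ≤ b i)
    (hs : ∑ i, b i ≤ ∑ i, a i) : a = b := by
  funext i
  by_contra hne
  have h1 : a i < b i := lt_of_le_of_ne (hle i) hne
  have := Finset.sum_lt_sum (fun j (_ : j ∈ Finset.univ) => hle j)
    ⟨i, Finset.mem_univ i, h1⟩
  omega

lemma bmoves_finite (hA : IsHomogeneousMatrix A) (n : ℕ) : (Bmoves A n).Finite := by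
  set S : Set (Fin p → ℕ) := Set.pi Set.univ (fun _ : Fin p => Set.Iic n) with hS
  have hSfin : S.Finite := Set.Finite.pi fun _ => Set.finite_Iic _
  have hsub : Bmoves A n ⊆
      (fun q : (Fin p → ℕ) × (Fin p → ℕ) => natToInt q.1 - natToInt q.2) '' (S ×ˢ S) := by
    rintro z ⟨hz, hdeg⟩
    refine ⟨(posOf z, negOf z), ⟨?_, ?_⟩, posOf_sub_negOf z⟩
    · intro i _
      have : posOf z i ≤ ∑ j, posOf z j :=
        Finset.single_le_sum (fun j _ => Nat.zero_le _) (Finset.mem_univ i)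
      exact le_trans this hdeg
    · intro i _
      have h1 : negOf z i ≤ ∑ j, negOf z j :=
        Finset.single_le_sum (fun j _ => Nat.zero_le _) (Finset.mem_univ i)
      have h2 : ∑ j, negOf z j = degOf z := (degOf_eq_sum_negOf hA hz).symm
      exact le_trans h1 (h2 ▸ hdeg)
  exact ((hSfin.prod hSfin).image _).subset hsub

lemma accessible_of_common_support (hA : IsHomogeneousMatrix A) {x y : Fin p → ℕ}
    (hf : A.mulVec (natToInt x) = A.mulVec (natToInt y))
    {i₀ : Fin p} (hx0 : x i₀ ≠ 0) (hy0 : y i₀ ≠ 0) :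
    Accessible (Bmoves A (∑ i, x i - 1)) x y := by
  have hsum : ∑ i, x i = ∑ i, y i := sum_eq_of_mulVec_eq hA hf
  have hmove : IsMove A (natToInt y - natToInt x) := by
    unfold IsMove; rw [Matrix.mulVec_sub, hf, sub_self]
  have hdeg : degOf (natToInt y - natToInt x) ≤ ∑ i, x i - 1 := by
    have hlt : ∑ i, ((natToInt y - natToInt x) i).toNat < ∑ i, y i := by
      refine Finset.sum_lt_sum (fun j _ => ?_) ⟨i₀, Finset.mem_univ i₀, ?_⟩
      · simp only [natToInt, Pi.sub_apply]; omega
      · simp only [natToInt, Pi.sub_apply]; omega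
    have : degOf (natToInt y - natToInt x) < ∑ i, x i := by
      rw [hsum]; exact hlt
    omega
  exact accessible_single (z := natToInt y - natToInt x)
    (show _ ∈ Bmoves A (∑ i, x i - 1) from ⟨hmove, hdeg⟩) (by abel)

lemma parts_eq_of_big_step (hA : IsHomogeneousMatrix A) {u v : Fin p → ℕ} {w : Fin p → ℤ}
    (hw : IsMove A w) (h : natToInt v = natToInt u + w) (hdeg : ∑ i, u i ≤ degOf w) :
    negOf w = u ∧ posOf w = v := by
  have hle : ∀ i, negOf w i ≤ u i := by
    intro i
    have := congrFun h i
    simp only [natToInt, Pi.add_apply] at this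
    simp only [negOf]
    omega
  have hsum : ∑ i, u i ≤ ∑ i, negOf w i := by
    rw [← degOf_eq_sum_negOf hA hw]; exact hdeg
  have h1 : negOf w = u := eq_of_le_of_sum_le hle hsum
  refine ⟨h1, natToInt_inj ?_⟩
  have h2 := posOf_sub_negOf w
  have h3 : natToInt v = natToInt u + (natToInt (posOf w) - natToInt (negOf w)) := by
    rw [h2]; exact h
  rw [h3, h1]
  abel

lemma move_neg {z : Fin p → ℤ} (hz : IsMove A z) : IsMove A (-z) := by
  unfold IsMove at *; rw [Matrix.mulVec_neg, hz, neg_zero]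

lemma degOf_neg (hA : IsHomogeneousMatrix A) {z : Fin p → ℤ} (hz : IsMove A z) :
    degOf (-z) = degOf z := by
  show ∑ i, posOf (-z) i = degOf z
  rw [posOf_neg, ← degOf_eq_sum_negOf hA hz]

lemma mstep_cases (hA : IsHomogeneousMatrix A) {B : Set (Fin p → ℤ)}
    (hB : ∀ z ∈ B, IsMove A z) {u v : Fin p → ℕ} (h : MStep B u v) {n : ℕ}
    (hn : ∑ i, u i = n) :
    Accessible (Bmoves A (n - 1)) u v ∨
      ∃ w ∈ B, (negOf w = u ∧ posOf w = v) ∨ (posOf w = u ∧ negOf w = v) := by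
  obtain ⟨z, hz, hstep⟩ := h
  by_cases hd : degOf z ≤ n - 1
  · left
    have hzmem : z ∈ Bmoves A (n - 1) := ⟨hB z hz, hd⟩
    rcases hstep with h | h
    · exact accessible_single hzmem h
    · exact accessible_symm (accessible_single (x := v) (y := u) hzmem
        (by rw [h]; abel))
  · right
    have hdeg : n ≤ degOf z := by omega
    rcases hstep with h | h
    · exact ⟨z, hz, Or.inl (parts_eq_of_big_step hA (hB z hz) h (hn ▸ hdeg))⟩
    · have h' : natToInt v = natToInt u + (-z) := by rw [h]; abel
      have hd2 : ∑ i, u i ≤ degOf (-z) := by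
        rw [degOf_neg hA (hB z hz)]; omega
      have hparts := parts_eq_of_big_step hA (move_neg (hB z hz)) h' hd2
      exact ⟨z, hz, Or.inr ⟨(negOf_neg z) ▸ hparts.1, (posOf_neg z) ▸ hparts.2⟩⟩




/-- The monoid of pairs with equal image. -/
def inP (A : Matrix (Fin d) (Fin p) ℤ) (q : (Fin p → ℕ) × (Fin p → ℕ)) : Prop :=
  A.mulVec (natToInt q.1) = A.mulVec (natToInt q.2)

def IsAtomP (A : Matrix (Fin d) (Fin p) ℤ) (q : (Fin p → ℕ) × (Fin p → ℕ)) : Prop :=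
  inP A q ∧ q ≠ 0 ∧ ∀ q', inP A q' → q' ≤ q → q' ≠ 0 → q' = q

lemma atoms_finite (A : Matrix (Fin d) (Fin p) ℤ) : {q | IsAtomP A q}.Finite := by
  by_contra hinf
  have hinf2 : {q | IsAtomP A q}.Infinite := hinf
  have f := hinf2.natEmbedding
  have hpwo : (Set.univ : Set ((Fin p → ℕ) × (Fin p → ℕ))).IsPWO := by
    have h1 : (Set.univ : Set (Fin p → ℕ)).IsPWO :=
      Set.isPWO_of_wellQuasiOrderedLE Set.univ
    exact (h1.prod h1).mono (fun q _ => ⟨trivial, trivial⟩)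
  obtain ⟨m, n, hmn, hle⟩ := hpwo (fun k => ⟨(f k).1, trivial⟩)
  have hm := (f m).2
  have hn := (f n).2
  simp only [Set.mem_setOf_eq] at hm hn
  have heq : (f m : (Fin p → ℕ) × (Fin p → ℕ)) = (f n : (Fin p → ℕ) × (Fin p → ℕ)) :=
    hn.2.2 _ hm.1 hle hm.2.1
  exact (Nat.ne_of_lt hmn) (f.injective (Subtype.ext heq))

lemma pair_fst_sum_lt (hA : IsHomogeneousMatrix A)
    {q q' : (Fin p → ℕ) × (Fin p → ℕ)} (hq' : inP A q') (hle : q' ≤ q)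
    (hne : q' ≠ q) (hq : inP A q) : ∑ i, q'.1 i < ∑ i, q.1 i := by
  have h1 : ∀ i, q'.1 i ≤ q.1 i := fun i => hle.1 i
  have h2 : ∀ i, q'.2 i ≤ q.2 i := fun i => hle.2 i
  rcases lt_or_eq_of_le (Finset.sum_le_sum (fun i _ => h1 i)) with h | h
  · exact h
  · exfalso
    have e1 : q'.1 = q.1 := eq_of_le_of_sum_le h1 (le_of_eq h.symm)
    have e2 : q'.2 = q.2 := by
      refine eq_of_le_of_sum_le h2 ?_
      have s1 : ∑ i, q'.1 i = ∑ i, q'.2 i := sum_eq_of_mulVec_eq hA hq'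
      have s2 : ∑ i, q.1 i = ∑ i, q.2 i := sum_eq_of_mulVec_eq hA hq
      omega
    exact hne (Prod.ext e1 e2)

lemma exists_atom_le (hA : IsHomogeneousMatrix A) {q : (Fin p → ℕ) × (Fin p → ℕ)}
    (hq : inP A q) (hne : q ≠ 0) : ∃ a, IsAtomP A a ∧ a ≤ q := by
  generalize hn : ∑ i, q.1 i = n
  induction n using Nat.strong_induction_on generalizing q with
  | _ n ih =>
  by_cases hatom : ∀ q', inP A q' → q' ≤ q → q' ≠ 0 → q' = q
  · exact ⟨q, ⟨hq, hne, hatom⟩, le_refl q⟩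
  · push_neg at hatom
    obtain ⟨q', hq'P, hq'le, hq'0, hq'ne⟩ := hatom
    have hlt : ∑ i, q'.1 i < n := hn ▸ pair_fst_sum_lt hA hq'P hq'le hq'ne hq
    obtain ⟨a, ha, hale⟩ := ih _ hlt hq'P hq'0 rfl
    exact ⟨a, ha, le_trans hale hq'le⟩

lemma exists_atom_bound (A : Matrix (Fin d) (Fin p) ℤ) :
    ∃ N, ∀ a, IsAtomP A a → ∑ i, a.1 i ≤ N := by
  obtain ⟨N, hN⟩ := ((atoms_finite A).image (fun a => ∑ i, a.1 i)).bddAbove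
  exact ⟨N, fun a ha => hN (Set.mem_image_of_mem _ ha)⟩

lemma sum_pos_of_ne_zero {a : Fin p → ℕ} (ha : a ≠ 0) : 0 < ∑ i, a i := by
  by_contra h
  push_neg at h
  apply ha
  funext i
  have : ∑ i, a i = 0 := Nat.le_zero.mp h
  have := Finset.sum_eq_zero_iff.mp this i (Finset.mem_univ i)
  simpa using this

lemma bmoves_connect (hA : IsHomogeneousMatrix A) {N : ℕ}
    (hN : ∀ a, IsAtomP A a → ∑ i, a.1 i ≤ N) :
    ∀ n (x y : Fin p → ℕ), ∑ i, x i = n →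
      A.mulVec (natToInt x) = A.mulVec (natToInt y) → Accessible (Bmoves A N) x y := by
  intro n
  induction n using Nat.strong_induction_on with
  | _ n ih =>
  intro x y hn hf
  by_cases hxy : x = y
  · exact hxy ▸ Relation.ReflTransGen.refl
  have hq : inP A (x, y) := hf
  have hq0 : (x, y) ≠ 0 := by
    intro h
    exact hxy (by rw [show x = 0 from congrArg Prod.fst h, show y = 0 from congrArg Prod.snd h])
  obtain ⟨⟨a, b⟩, ⟨haP, ha0, hamin⟩, hle⟩ := exists_atom_le hA hq hq0
  have hax : ∀ i, a i ≤ x i := fun i => hle.1 i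
  have hby : ∀ i, b i ≤ y i := fun i => hle.2 i
  have hsab : ∑ i, a i = ∑ i, b i := sum_eq_of_mulVec_eq hA haP
  have ha0' : a ≠ 0 := by
    intro h
    apply ha0
    have hb0 : ∑ i, b i = 0 := by rw [← hsab, h]; simp
    have : b = 0 := by
      funext i
      simpa using Finset.sum_eq_zero_iff.mp hb0 i (Finset.mem_univ i)
    rw [h, this]; rfl
  have hmv : IsMove A (natToInt b - natToInt a) := by
    unfold IsMove
    rw [Matrix.mulVec_sub, haP, sub_self]
  have hdeg : degOf (natToInt b - natToInt a) ≤ N := by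
    have h1 : degOf (natToInt b - natToInt a) ≤ ∑ i, b i :=
      Finset.sum_le_sum (fun i _ => by simp only [posOf, natToInt, Pi.sub_apply]; omega)
    have h2 : ∑ i, a i ≤ N := hN (a, b) ⟨haP, ha0, hamin⟩
    omega
  set x1 : Fin p → ℕ := fun i => x i - a i with hx1
  set y1 : Fin p → ℕ := fun i => y i - b i with hy1
  have hstep : natToInt (x1 + b) = natToInt x + (natToInt b - natToInt a) := by
    funext i
    have := hax i
    simp only [natToInt, Pi.add_apply, Pi.sub_apply, hx1]
    push_cast [Nat.cast_sub (hax i)]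
    ring
  have hmem : (natToInt b - natToInt a) ∈ Bmoves A N := ⟨hmv, hdeg⟩
  have hacc1 : Accessible (Bmoves A N) x (x1 + b) :=
    accessible_single hmem hstep
  have e1 : natToInt x1 = natToInt x - natToInt a := by
    funext i
    simp only [natToInt, Pi.sub_apply, hx1]
    push_cast [Nat.cast_sub (hax i)]
    ring
  have e2 : natToInt y1 = natToInt y - natToInt b := by
    funext i
    simp only [natToInt, Pi.sub_apply, hy1]
    push_cast [Nat.cast_sub (hby i)]
    ring
  have hfx1 : A.mulVec (natToInt x1) = A.mulVec (natToInt y1) := by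
    rw [e1, e2, Matrix.mulVec_sub, Matrix.mulVec_sub, hf, haP]
  have hsum1 : ∑ i, x1 i < n := by
    have hsa : 0 < ∑ i, a i := sum_pos_of_ne_zero ha0'
    have hsplit : ∑ i, x1 i + ∑ i, a i = ∑ i, x i := by
      rw [← Finset.sum_add_distrib]
      exact Finset.sum_congr rfl fun i _ => by have := hax i; simp [hx1]; omega
    omega
  have hacc2 : Accessible (Bmoves A N) x1 y1 := ih _ hsum1 x1 y1 rfl hfx1
  have hacc3 : Accessible (Bmoves A N) (b + x1) (b + y1) := accessible_add_left b hacc2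
  have hyeq : b + y1 = y := by
    funext i; have := hby i; simp [hy1]; omega
  have hxcomm : x1 + b = b + x1 := add_comm _ _
  rw [hxcomm] at hacc1
  rw [hyeq] at hacc3
  exact hacc1.trans hacc3

lemma exists_bmoves_markov (hA : IsHomogeneousMatrix A) :
    ∃ N, ∀ n, N ≤ n → IsMarkovBasis A (Bmoves A n) := by
  obtain ⟨N, hN⟩ := exists_atom_bound A
  refine ⟨N, fun n hn => ⟨bmoves_finite hA n, fun z hz => hz.1, ?_⟩⟩
  intro t x hx y hy
  have hf : A.mulVec (natToInt x) = A.mulVec (natToInt y) := (hx : _ = t).trans (hy : _ = t).symm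
  have hsub : Bmoves A N ⊆ Bmoves A n := fun z hz => ⟨hz.1, le_trans hz.2 hn⟩
  exact accessible_mono hsub (bmoves_connect hA hN _ x y rfl hf)


lemma eq_zero_of_sum_eq_zero {a : Fin p → ℕ} (h : ∑ i, a i = 0) : a = 0 := by
  funext i
  simpa using Finset.sum_eq_zero_iff.mp h i (Finset.mem_univ i)

lemma posOf_le_of_eq_sub {z : Fin p → ℤ} {x y : Fin p → ℕ}
    (h : z = natToInt x - natToInt y) (i : Fin p) : posOf z i ≤ x i := by
  have := congrFun h i
  simp only [natToInt, Pi.sub_apply, posOf] at this ⊢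
  omega

lemma negOf_le_of_eq_sub {z : Fin p → ℤ} {x y : Fin p → ℕ}
    (h : z = natToInt x - natToInt y) (i : Fin p) : negOf z i ≤ y i := by
  have := congrFun h i
  simp only [natToInt, Pi.sub_apply, negOf] at this ⊢
  omega

lemma exists_basis_avoiding (hA : IsHomogeneousMatrix A) {x x' : Fin p → ℕ}
    (hne : x' ≠ x)
    (hfib : A.mulVec (natToInt x') = A.mulVec (natToInt x))
    (hacc : Accessible (Bmoves A (∑ i, x i - 1)) x x') :
    ∃ B, IsMarkovBasis A B ∧ ∀ z ∈ B, posOf z ≠ x ∧ negOf z ≠ x := by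
  have hsx' : ∑ i, x' i = ∑ i, x i := sum_eq_of_mulVec_eq hA hfib
  have hx0 : x ≠ 0 := by
    intro h0
    apply hne
    have h1 : ∑ i, x' i = 0 := by
      rw [hsx', h0]; simp
    rw [eq_zero_of_sum_eq_zero h1, h0]
  have hnpos : 0 < ∑ i, x i := sum_pos_of_ne_zero hx0
  obtain ⟨N, hMB⟩ := exists_bmoves_markov hA
  set B : Set (Fin p → ℤ) :=
    {z | z ∈ Bmoves A (max N (∑ i, x i)) ∧ posOf z ≠ x ∧ negOf z ≠ x} ∪
    {z | ∃ y, y ∈ fiberOf A (A.mulVec (natToInt x)) ∧ y ≠ x ∧ y ≠ x' ∧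
      z = natToInt x' - natToInt y} with hBdef
  have hmoves : ∀ z ∈ B, IsMove A z := by
    rintro z (⟨hz, -⟩ | ⟨y, hy, -, -, rfl⟩)
    · exact hz.1
    · unfold IsMove
      rw [Matrix.mulVec_sub, (hy : _ = _), hfib, sub_self]
  have havoid : ∀ z ∈ B, posOf z ≠ x ∧ negOf z ≠ x := by
    rintro z (⟨-, hz⟩ | ⟨y, hy, hyx, -, rfl⟩)
    · exact hz
    · constructor
      · intro hpos
        apply hne
        refine (eq_of_le_of_sum_le (a := x) (b := x') ?_ (le_of_eq hsx')).symm
        intro i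
        rw [← hpos]
        exact posOf_le_of_eq_sub rfl i
      · intro hneg
        apply hyx
        have hsy : ∑ i, y i = ∑ i, x i := sum_eq_of_mulVec_eq hA (hy : _ = _)
        refine (eq_of_le_of_sum_le (a := x) (b := y) ?_ (le_of_eq hsy)).symm
        intro i
        rw [← hneg]
        exact negOf_le_of_eq_sub rfl i
  have hfin : B.Finite := by
    apply Set.Finite.union
    · exact (bmoves_finite hA _).subset (fun z hz => hz.1)
    · have hsub : {z | ∃ y, y ∈ fiberOf A (A.mulVec (natToInt x)) ∧ y ≠ x ∧ y ≠ x' ∧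
          z = natToInt x' - natToInt y} ⊆
          (fun y => natToInt x' - natToInt y) '' (fiberOf A (A.mulVec (natToInt x))) := by
        rintro z ⟨y, hy, -, -, rfl⟩
        exact ⟨y, hy, rfl⟩
      exact ((fiber_finite hA _).image _).subset hsub
  have hsmall_sub : Bmoves A (∑ i, x i - 1) ⊆ B := by
    intro z hz
    left
    refine ⟨⟨hz.1, le_trans hz.2 (le_trans (Nat.sub_le _ 1) (le_max_right _ _))⟩, ?_, ?_⟩
    · intro h
      have hd : degOf z = ∑ i, x i := by
        show ∑ i, posOf z i = ∑ i, x i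
        rw [h]
      have := hz.2
      omega
    · intro h
      have h2 : ∑ i, negOf z i = ∑ i, x i := by rw [h]
      have h3 : degOf z = ∑ i, negOf z i := degOf_eq_sum_negOf hA hz.1
      have := hz.2
      omega
  have hsim : ∀ (u v : Fin p → ℕ) (z : Fin p → ℤ), IsMove A z → posOf z = x →
      natToInt v = natToInt u + z → Accessible B u v := by
    intro u v z hmv hpos hstep
    have hzeq : z = natToInt x - natToInt (negOf z) := by
      rw [← hpos, posOf_sub_negOf]
    have hyfib : negOf z ∈ fiberOf A (A.mulVec (natToInt x)) := by
      show A.mulVec (natToInt (negOf z)) = A.mulVec (natToInt x)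
      have h1 : A.mulVec (natToInt x) - A.mulVec (natToInt (negOf z)) = 0 := by
        rw [← Matrix.mulVec_sub, ← hzeq]
        exact hmv
      exact (sub_eq_zero.mp h1).symm
    have hdisj : ∀ i, x i = 0 ∨ negOf z i = 0 := by
      intro i
      rw [← hpos]
      simp only [posOf, negOf]
      omega
    have hyx : negOf z ≠ x := by
      intro h
      apply hx0
      funext i
      rcases hdisj i with h0 | h0
      · simpa using h0
      · simpa using (h ▸ h0)
    have hle : ∀ i, negOf z i ≤ u i := by
      intro i
      have h1 := congrFun hstep i
      have h2 := congrFun hzeq i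
      simp only [natToInt, Pi.add_apply, Pi.sub_apply] at h1 h2
      rcases hdisj i with h0 | h0 <;> omega
    have hu : u = (fun i => u i - negOf z i) + negOf z := by
      funext i
      have := hle i
      simp only [Pi.add_apply]
      omega
    have hv : v = (fun i => u i - negOf z i) + x := by
      apply natToInt_inj
      funext i
      have h1 := congrFun hstep i
      have h2 := congrFun hzeq i
      have := hle i
      simp only [natToInt, Pi.add_apply, Pi.sub_apply] at h1 h2 ⊢
      omega
    have hxpath : Accessible B ((fun i => u i - negOf z i) + x') ((fun i => u i - negOf z i) + x) :=
      accessible_mono hsmall_sub (accessible_add_left _ (accessible_symm hacc))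
    by_cases hyx' : negOf z = x'
    · rw [hu, hv]
      rw [hyx'] at hxpath ⊢
      exact hxpath
    · have hz2 : (natToInt x' - natToInt (negOf z)) ∈ B :=
        Or.inr ⟨negOf z, hyfib, hyx, hyx', rfl⟩
      have hstep2 : Accessible B ((fun i => u i - negOf z i) + negOf z)
          ((fun i => u i - negOf z i) + x') :=
        accessible_single hz2 (by rw [natToInt_add, natToInt_add]; abel)
      rw [hu, hv]
      exact hstep2.trans hxpath
  have hstep_sim : ∀ u v : Fin p → ℕ, MStep (Bmoves A (max N (∑ i, x i))) u v →
      Accessible B u v := by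
    intro u v h
    obtain ⟨z, hzK, hdir⟩ := h
    by_cases hp : posOf z = x
    · rcases hdir with h | h
      · exact hsim u v z hzK.1 hp h
      · exact accessible_symm (hsim v u z hzK.1 hp (by rw [h]; abel))
    by_cases hq : negOf z = x
    · have hp2 : posOf (-z) = x := by rw [posOf_neg]; exact hq
      have hmv2 : IsMove A (-z) := move_neg hzK.1
      rcases hdir with h | h
      · exact accessible_symm (hsim v u (-z) hmv2 hp2 (by rw [h]; abel))
      · exact hsim u v (-z) hmv2 hp2 (by rw [h]; abel)
    · exact Relation.ReflTransGen.single ⟨z, Or.inl ⟨hzK, hp, hq⟩, hdir⟩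
  have hK' : IsMarkovBasis A (Bmoves A (max N (∑ i, x i))) := hMB _ (le_max_left _ _)
  have hlift : ∀ u v : Fin p → ℕ, Accessible (Bmoves A (max N (∑ i, x i))) u v →
      Accessible B u v := by
    intro u v h
    induction h with
    | refl => exact Relation.ReflTransGen.refl
    | tail _ hbc ih => exact ih.trans (hstep_sim _ _ hbc)
  exact ⟨B, ⟨hfin, hmoves, fun s u hu v hv => hlift u v (hK'.2.2 s u hu v hv)⟩, havoid⟩

lemma singleton_class_of_indisp (hA : IsHomogeneousMatrix A) {x : Fin p → ℕ}
    (hx : IsIndispensableMonomial A x) {y : Fin p → ℕ}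
    (hfib : A.mulVec (natToInt y) = A.mulVec (natToInt x))
    (hacc : Accessible (Bmoves A (∑ i, x i - 1)) x y) : y = x := by
  by_contra hne
  obtain ⟨B, hB, havoid⟩ := exists_basis_avoiding hA hne hfib hacc
  obtain ⟨z, hzB, hz⟩ := hx B hB
  rcases hz with h | h
  · exact (havoid z hzB).1 h
  · exact (havoid z hzB).2 h

lemma indisp_of_singleton (hA : IsHomogeneousMatrix A) {x y : Fin p → ℕ}
    (hfib : A.mulVec (natToInt y) = A.mulVec (natToInt x))
    (hnacc : ¬ Accessible (Bmoves A (∑ i, x i - 1)) x y)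
    (hsing : ∀ u, A.mulVec (natToInt u) = A.mulVec (natToInt x) →
      Accessible (Bmoves A (∑ i, x i - 1)) x u → u = x) :
    IsIndispensableMonomial A x := by
  intro B hB
  have hxy : Accessible B x y := hB.2.2 (A.mulVec (natToInt x)) x rfl y hfib
  have main : ∀ v : Fin p → ℕ, Accessible B v y → v = x →
      ∃ z ∈ B, posOf z = x ∨ negOf z = x := by
    intro v hv
    induction hv using Relation.ReflTransGen.head_induction_on with
    | refl =>
      intro h
      rw [h] at hnacc
      exact absurd Relation.ReflTransGen.refl hnacc
    | @head a c hstep htail ih =>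
      intro hvx
      rw [hvx] at hstep
      rcases mstep_cases hA hB.2.1 hstep rfl with hsmall | ⟨w, hwB, hw⟩
      · have hc : A.mulVec (natToInt c) = A.mulVec (natToInt x) :=
          (mstep_mulVec hB.2.1 hstep).symm
        exact ih (hsing c hc hsmall)
      · rcases hw with ⟨h1, h2⟩ | ⟨h1, h2⟩
        · exact ⟨w, hwB, Or.inr h1⟩
        · exact ⟨w, hwB, Or.inl h1⟩
  exact main x hxy rfl


lemma mulVec_negOf_eq_posOf (hz : IsMove A z) :
    A.mulVec (natToInt (negOf z)) = A.mulVec (natToInt (posOf z)) := by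
  have h1 : A.mulVec (natToInt (posOf z)) - A.mulVec (natToInt (negOf z)) = 0 := by
    rw [← Matrix.mulVec_sub, posOf_sub_negOf]
    exact hz
  exact (sub_eq_zero.mp h1).symm

lemma exists_crossing (hA : IsHomogeneousMatrix A) {B : Set (Fin p → ℤ)}
    (hB : ∀ z ∈ B, IsMove A z) {x y : Fin p → ℕ} (hxy : Accessible B x y)
    (hnacc : ¬ Accessible (Bmoves A (∑ i, x i - 1)) x y) :
    ∃ w ∈ B, A.mulVec (natToInt (posOf w)) = A.mulVec (natToInt x) := by
  have main : ∀ v : Fin p → ℕ, Accessible B x v →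
      Accessible (Bmoves A (∑ i, x i - 1)) x v ∨
        ∃ w ∈ B, A.mulVec (natToInt (posOf w)) = A.mulVec (natToInt x) := by
    intro v hv
    induction hv with
    | refl => exact Or.inl Relation.ReflTransGen.refl
    | @tail b c htail hstep ih =>
      rcases ih with hsm | hw
      · have hfb : A.mulVec (natToInt x) = A.mulVec (natToInt b) :=
          accessible_mulVec (fun w hw => hw.1) hsm
        have hsb : ∑ i, b i = ∑ i, x i := (sum_eq_of_mulVec_eq hA hfb).symm
        rcases mstep_cases hA hB hstep hsb with hsm2 | ⟨w, hwB, hcase⟩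
        · exact Or.inl (hsm.trans hsm2)
        · right
          have hfc : A.mulVec (natToInt b) = A.mulVec (natToInt c) :=
            mstep_mulVec hB hstep
          rcases hcase with ⟨h1, h2⟩ | ⟨h1, h2⟩
          · exact ⟨w, hwB, by rw [h2, ← hfc, ← hfb]⟩
          · exact ⟨w, hwB, by rw [h1, ← hfb]⟩
      · exact Or.inr hw
  rcases main y hxy with h | h
  · exact absurd h hnacc
  · exact h

lemma forward_direction (hA : IsHomogeneousMatrix A)
    (h : ∃ B : Set (Fin p → ℤ), IsMinimalMarkovBasis A B ∧ ∀ z ∈ B,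
        IsIndispensableMonomial A (posOf z) ∨ IsIndispensableMonomial A (negOf z)) :
    ∀ z ∈ BMF A, ∃ C ∈ fiberClasses A (A.mulVec (natToInt (posOf z))),
      ∃ x : Fin p → ℕ, C = {x} := by
  obtain ⟨B, ⟨hBmk, -⟩, hprop⟩ := h
  rintro z ⟨hzmv, hz0, hznacc⟩
  have hfibxy : A.mulVec (natToInt (negOf z)) = A.mulVec (natToInt (posOf z)) :=
    mulVec_negOf_eq_posOf hzmv
  have hnacc : ¬ Accessible (Bmoves A (∑ i, posOf z i - 1)) (posOf z) (negOf z) := hznacc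
  have hxy : Accessible B (posOf z) (negOf z) :=
    hBmk.2.2 (A.mulVec (natToInt (posOf z))) (posOf z) rfl (negOf z) hfibxy
  obtain ⟨w, hwB, hwfib⟩ := exists_crossing hA hBmk.2.1 hxy hnacc
  -- the indispensable part v of w lies in the fiber of t
  have hwneg : A.mulVec (natToInt (negOf w)) = A.mulVec (natToInt (posOf w)) :=
    mulVec_negOf_eq_posOf (hBmk.2.1 w hwB)
  obtain ⟨v, hvfib, hvind⟩ :
      ∃ v : Fin p → ℕ, A.mulVec (natToInt v) = A.mulVec (natToInt (posOf z)) ∧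
        IsIndispensableMonomial A v := by
    rcases hprop w hwB with hind | hind
    · exact ⟨posOf w, hwfib, hind⟩
    · exact ⟨negOf w, hwneg.trans hwfib, hind⟩
  set t := A.mulVec (natToInt (posOf z)) with ht
  have hvF : v ∈ fiberOf A t := hvfib
  have hsamp : sampleSize A t = ∑ i, v i := sampleSize_eq hA hvF
  refine ⟨{y | y ∈ fiberOf A t ∧ Accessible (Bmoves A (sampleSize A t - 1)) v y},
    ⟨v, hvF, rfl⟩, v, ?_⟩
  ext u
  simp only [Set.mem_setOf_eq, Set.mem_singleton_iff]
  constructor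
  · rintro ⟨huF, huacc⟩
    refine singleton_class_of_indisp hA hvind ?_ ?_
    · exact (huF : _ = t).trans ((hvF : _ = t)).symm
    · rw [← hsamp]
      exact huacc
  · rintro rfl
    exact ⟨hvF, Relation.ReflTransGen.refl⟩


def accS (A : Matrix (Fin d) (Fin p) ℤ) (t : Fin d → ℤ) (u v : Fin p → ℕ) : Prop :=
  Accessible (Bmoves A (sampleSize A t - 1)) u v

def MultiT (A : Matrix (Fin d) (Fin p) ℤ) : Set (Fin d → ℤ) :=
  {t | ∃ x, x ∈ fiberOf A t ∧ ∃ y, y ∈ fiberOf A t ∧ ¬ accS A t x y}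

def classSet (A : Matrix (Fin d) (Fin p) ℤ) (t : Fin d → ℤ) (u : Fin p → ℕ) :
    Set (Fin p → ℕ) :=
  {v | v ∈ fiberOf A t ∧ accS A t u v}

def Cls (A : Matrix (Fin d) (Fin p) ℤ) (t : Fin d → ℤ) (c : Fin p → ℕ) :
    Set (Set (Fin p → ℕ)) :=
  {C | ∃ u, u ∈ fiberOf A t ∧ ¬ accS A t c u ∧ C = classSet A t u}

lemma step_decomp {u v : Fin p → ℕ} {w : Fin p → ℤ} (h : natToInt v = natToInt u + w) :
    (∀ i, negOf w i ≤ u i) ∧ u = (fun i => u i - negOf w i) + negOf w ∧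
      v = (fun i => u i - negOf w i) + posOf w := by
  have hle : ∀ i, negOf w i ≤ u i := by
    intro i
    have h1 := congrFun h i
    simp only [natToInt, Pi.add_apply, negOf] at h1 ⊢
    omega
  refine ⟨hle, ?_, ?_⟩
  · funext i
    have := hle i
    simp only [Pi.add_apply]
    omega
  · funext i
    have h1 := congrFun h i
    have h2 := hle i
    simp only [natToInt, Pi.add_apply, posOf, negOf] at h1 h2 ⊢
    omega

lemma cross_pair_atom (hA : IsHomogeneousMatrix A) {t : Fin d → ℤ} {x y : Fin p → ℕ}
    (hx : x ∈ fiberOf A t) (hy : y ∈ fiberOf A t)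
    (hnacc : ¬ Accessible (Bmoves A (∑ i, x i - 1)) x y) : IsAtomP A (x, y) := by
  have hf : A.mulVec (natToInt x) = A.mulVec (natToInt y) :=
    (hx : _ = t).trans (hy : _ = t).symm
  have hxy : x ≠ y := fun h => hnacc (h ▸ Relation.ReflTransGen.refl)
  refine ⟨hf, ?_, ?_⟩
  · intro h0
    exact hxy ((congrArg Prod.fst h0).trans (congrArg Prod.snd h0).symm)
  · rintro ⟨a, b⟩ hq' hle hne0
    by_contra hneq
    apply hnacc
    have hax : ∀ i, a i ≤ x i := fun i => hle.1 i
    have hby : ∀ i, b i ≤ y i := fun i => hle.2 i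
    have hsab : ∑ i, a i = ∑ i, b i := sum_eq_of_mulVec_eq hA hq'
    have hsxy : ∑ i, x i = ∑ i, y i := sum_eq_of_mulVec_eq hA hf
    have ha0 : a ≠ 0 := by
      intro h
      apply hne0
      have hb0 : ∑ i, b i = 0 := by rw [← hsab, h]; simp
      rw [h, eq_zero_of_sum_eq_zero hb0]
      rfl
    have hxa : (fun i => x i - a i) ≠ 0 := by
      intro h
      apply hneq
      have hax' : a = x := by
        funext i
        have h1 := congrFun h i
        have h2 := hax i
        simp only [Pi.zero_apply] at h1
        omega
      have hby' : b = y := by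
        refine eq_of_le_of_sum_le hby ?_
        rw [← hsab]
        rw [hax']
        omega
      rw [hax', hby']
    have hsa1 : 1 ≤ ∑ i, a i := sum_pos_of_ne_zero ha0
    have hsxa1 : 1 ≤ ∑ i, (x i - a i) := sum_pos_of_ne_zero hxa
    have hsxa : ∑ i, (x i - a i) + ∑ i, a i = ∑ i, x i := by
      rw [← Finset.sum_add_distrib]
      exact Finset.sum_congr rfl fun i _ => by have := hax i; omega
    have hsyb : ∑ i, (y i - b i) + ∑ i, b i = ∑ i, y i := by
      rw [← Finset.sum_add_distrib]
      exact Finset.sum_congr rfl fun i _ => by have := hby i; omega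
    have exa : natToInt (fun i => x i - a i) = natToInt x - natToInt a := by
      funext i
      have := hax i
      simp only [natToInt, Pi.sub_apply]
      omega
    have eyb : natToInt (fun i => y i - b i) = natToInt y - natToInt b := by
      funext i
      have := hby i
      simp only [natToInt, Pi.sub_apply]
      omega
    have hmv1 : IsMove A (natToInt b - natToInt a) := by
      unfold IsMove
      rw [Matrix.mulVec_sub, hq', sub_self]
    have hmv2 : IsMove A (natToInt (fun i => y i - b i) - natToInt (fun i => x i - a i)) := by
      unfold IsMove
      rw [exa, eyb, Matrix.mulVec_sub, Matrix.mulVec_sub, Matrix.mulVec_sub, hq', hf]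
      abel
    have hdeg1 : degOf (natToInt b - natToInt a) ≤ ∑ i, x i - 1 := by
      have h1 : degOf (natToInt b - natToInt a) ≤ ∑ i, b i :=
        Finset.sum_le_sum fun i _ => posOf_le_of_eq_sub rfl i
      omega
    have hdeg2 : degOf (natToInt (fun i => y i - b i) - natToInt (fun i => x i - a i)) ≤
        ∑ i, x i - 1 := by
      have h1 : degOf (natToInt (fun i => y i - b i) - natToInt (fun i => x i - a i)) ≤
          ∑ i, (y i - b i) :=
        Finset.sum_le_sum fun i _ => posOf_le_of_eq_sub rfl i
      omega
    have hstep1 : natToInt ((fun i => x i - a i) + b) = natToInt x + (natToInt b - natToInt a) := by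
      funext i
      have := hax i
      simp only [natToInt, Pi.add_apply, Pi.sub_apply]
      omega
    have hstep2 : natToInt y = natToInt ((fun i => x i - a i) + b) +
        (natToInt (fun i => y i - b i) - natToInt (fun i => x i - a i)) := by
      funext i
      have h1 := hax i
      have h2 := hby i
      simp only [natToInt, Pi.add_apply, Pi.sub_apply]
      omega
    exact (accessible_single (show _ ∈ Bmoves A (∑ i, x i - 1) from ⟨hmv1, hdeg1⟩)
      hstep1).trans (accessible_single
        (show _ ∈ Bmoves A (∑ i, x i - 1) from ⟨hmv2, hdeg2⟩) hstep2)

lemma multiT_finite (hA : IsHomogeneousMatrix A) : (MultiT A).Finite := by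
  refine ((atoms_finite A).image (fun q => A.mulVec (natToInt q.1))).subset ?_
  rintro t ⟨x, hx, y, hy, hnacc⟩
  have hs : sampleSize A t = ∑ i, x i := sampleSize_eq hA hx
  have hatom : IsAtomP A (x, y) := by
    refine cross_pair_atom hA hx hy ?_
    rw [← hs]
    exact hnacc
  exact ⟨(x, y), hatom, hx⟩


lemma reverse_direction (hA : IsHomogeneousMatrix A)
    (hRHS : ∀ z ∈ BMF A, ∃ C ∈ fiberClasses A (A.mulVec (natToInt (posOf z))),
      ∃ x : Fin p → ℕ, C = {x}) :
    ∃ B : Set (Fin p → ℤ), IsMinimalMarkovBasis A B ∧ ∀ z ∈ B,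
      IsIndispensableMonomial A (posOf z) ∨ IsIndispensableMonomial A (negOf z) := by
  classical
  -- centers of singleton classes for each multi-class fiber
  have hcenter : ∀ t ∈ MultiT A, ∃ c, c ∈ fiberOf A t ∧
      ∀ u ∈ fiberOf A t, accS A t c u → u = c := by
    rintro t ⟨x, hx, y, hy, hnacc⟩
    have hxy : x ≠ y := fun h => hnacc (h ▸ Relation.ReflTransGen.refl)
    have hdisj : ∀ i, x i = 0 ∨ y i = 0 := by
      by_contra hcon
      push_neg at hcon
      obtain ⟨i, hxi, hyi⟩ := hcon
      apply hnacc
      have hf : A.mulVec (natToInt x) = A.mulVec (natToInt y) :=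
        (hx : _ = t).trans (hy : _ = t).symm
      have h1 := accessible_of_common_support hA hf hxi hyi
      unfold accS
      rw [sampleSize_eq hA hx]
      exact h1
    have hposz : posOf (natToInt x - natToInt y) = x := posOf_natToInt_sub hdisj
    have hnegz : negOf (natToInt x - natToInt y) = y := negOf_natToInt_sub hdisj
    have hmv : IsMove A (natToInt x - natToInt y) := by
      unfold IsMove
      rw [Matrix.mulVec_sub, (hx : _ = t), (hy : _ = t), sub_self]
    have hz0 : natToInt x - natToInt y ≠ 0 := by
      intro h0
      exact hxy (natToInt_inj (sub_eq_zero.mp h0))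
    have hdeg : degOf (natToInt x - natToInt y) = sampleSize A t := by
      rw [sampleSize_eq hA hx]
      show ∑ i, posOf (natToInt x - natToInt y) i = ∑ i, x i
      rw [hposz]
    have hzBMF : (natToInt x - natToInt y) ∈ BMF A := by
      refine ⟨hmv, hz0, ?_⟩
      rw [hposz, hnegz, hdeg]
      exact hnacc
    obtain ⟨C, hC, c, hCc⟩ := hRHS _ hzBMF
    rw [show A.mulVec (natToInt (posOf (natToInt x - natToInt y))) = t by
      rw [hposz]; exact (hx : _ = t)] at hC
    obtain ⟨x₀, hx₀, hCdef⟩ := hC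
    have hcC : c ∈ C := by rw [hCc]; rfl
    rw [hCdef] at hcC
    refine ⟨c, hcC.1, ?_⟩
    intro u hu hcu
    have huC : u ∈ C := by
      rw [hCdef]
      exact ⟨hu, Relation.ReflTransGen.trans hcC.2 hcu⟩
    rw [hCc] at huC
    exact huC
  choose! cent hcentF hcentS using hcenter
  -- representatives of classes
  have hrepex : ∀ (t : Fin d → ℤ) (C : Set (Fin p → ℕ)), C ∈ Cls A t (cent t) →
      ∃ r, r ∈ C := by
    rintro t C ⟨u, hu, -, rfl⟩
    exact ⟨u, hu, Relation.ReflTransGen.refl⟩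
  choose! repf hrepf using hrepex
  set Bstar : Set (Fin p → ℤ) :=
    ⋃ t ∈ MultiT A, (fun C => natToInt (repf t C) - natToInt (cent t)) '' (Cls A t (cent t))
    with hBstar
  have hmemBstar : ∀ z, z ∈ Bstar ↔ ∃ t ∈ MultiT A, ∃ C ∈ Cls A t (cent t),
      z = natToInt (repf t C) - natToInt (cent t) := by
    intro z
    rw [hBstar]
    simp only [Set.mem_iUnion, Set.mem_image, exists_prop]
    constructor
    · rintro ⟨t, ht, C, hC, heq⟩
      exact ⟨t, ht, C, hC, heq.symm⟩
    · rintro ⟨t, ht, C, hC, heq⟩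
      exact ⟨t, ht, C, hC, heq.symm⟩
  have hparts : ∀ t ∈ MultiT A, ∀ C ∈ Cls A t (cent t),
      posOf (natToInt (repf t C) - natToInt (cent t)) = repf t C ∧
      negOf (natToInt (repf t C) - natToInt (cent t)) = cent t ∧
      repf t C ∈ fiberOf A t ∧ ¬ accS A t (cent t) (repf t C) := by
    intro t ht C hC
    obtain ⟨u, hu, hnac, hCeq⟩ := hC
    have hr0 := hrepf t C ⟨u, hu, hnac, hCeq⟩
    have hr : repf t C ∈ classSet A t u := by rw [← hCeq]; exact hr0
    have hnacr : ¬ accS A t (cent t) (repf t C) := by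
      intro hc
      exact hnac (Relation.ReflTransGen.trans hc (accessible_symm hr.2))
    have hdisj : ∀ i, repf t C i = 0 ∨ cent t i = 0 := by
      by_contra hcon
      push_neg at hcon
      obtain ⟨i, h1, h2⟩ := hcon
      apply hnacr
      have hf : A.mulVec (natToInt (cent t)) = A.mulVec (natToInt (repf t C)) :=
        (hcentF t ht : _ = t).trans (hr.1 : _ = t).symm
      have h3 := accessible_of_common_support hA hf h2 h1
      unfold accS
      rw [sampleSize_eq hA (hcentF t ht)]
      exact h3
    exact ⟨posOf_natToInt_sub hdisj, negOf_natToInt_sub hdisj, hr.1, hnacr⟩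
  have hClsfin : ∀ t, (Cls A t (cent t)).Finite := by
    intro t
    refine ((fiber_finite hA t).image (classSet A t)).subset ?_
    rintro C ⟨u, hu, -, rfl⟩
    exact ⟨u, hu, rfl⟩
  have hBfin : Bstar.Finite := by
    rw [hBstar]
    exact Set.Finite.biUnion (multiT_finite hA) (fun t _ => ((hClsfin t).image _))
  have hBmoves : ∀ z ∈ Bstar, IsMove A z := by
    intro z hz
    obtain ⟨t, ht, C, hC, rfl⟩ := (hmemBstar z).1 hz
    have h1 := (hparts t ht C hC).2.2.1
    unfold IsMove
    rw [Matrix.mulVec_sub, (h1 : _ = t), (hcentF t ht : _ = t), sub_self]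
  -- class equality from representative accessibility
  have hclass_eq : ∀ t, ∀ C ∈ Cls A t (cent t), ∀ C' ∈ Cls A t (cent t),
      accS A t (repf t C) (repf t C') → C = C' := by
    intro t C hC C' hC' hacc2
    obtain ⟨u, hu, hn, hCeq⟩ := hC
    obtain ⟨u', hu', hn', hCeq'⟩ := hC'
    have hr : repf t C ∈ classSet A t u := by
      rw [← hCeq]; exact hrepf t C ⟨u, hu, hn, hCeq⟩
    have hr' : repf t C' ∈ classSet A t u' := by
      rw [← hCeq']; exact hrepf t C' ⟨u', hu', hn', hCeq'⟩
    rw [hCeq, hCeq']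
    ext v₂
    constructor
    · rintro ⟨hvf, hva⟩
      exact ⟨hvf, Relation.ReflTransGen.trans hr'.2 (Relation.ReflTransGen.trans
        (accessible_symm hacc2) (Relation.ReflTransGen.trans (accessible_symm hr.2) hva))⟩
    · rintro ⟨hvf, hva⟩
      exact ⟨hvf, Relation.ReflTransGen.trans hr.2 (Relation.ReflTransGen.trans
        hacc2 (Relation.ReflTransGen.trans (accessible_symm hr'.2) hva))⟩
  -- connectivity
  have hconn : ∀ n, ∀ u v : Fin p → ℕ, ∑ i, u i = n →
      A.mulVec (natToInt u) = A.mulVec (natToInt v) → Accessible Bstar u v := by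
    intro n
    induction n using Nat.strong_induction_on with
    | _ n ih =>
    have hstep1 : ∀ (a b : Fin p → ℕ) (w : Fin p → ℤ), IsMove A w → degOf w ≤ n - 1 →
        natToInt b = natToInt a + w → Accessible Bstar a b := by
      intro a b w hwmv hwdeg hstep
      by_cases hw0 : w = 0
      · have hab : natToInt b = natToInt a := by rw [hstep, hw0]; simp
        rw [natToInt_inj hab]
        exact Relation.ReflTransGen.refl
      · have hdegpos : 1 ≤ degOf w := by
          by_contra hdd
          push_neg at hdd
          apply hw0
          have hps : ∑ i, posOf w i = 0 := by
            have : degOf w = 0 := by omega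
            exact this
          have hns : ∑ i, negOf w i = 0 := by
            rw [← degOf_eq_sum_negOf hA hwmv]
            omega
          funext i
          have h1 := Finset.sum_eq_zero_iff.mp hps i (Finset.mem_univ i)
          have h2 := Finset.sum_eq_zero_iff.mp hns i (Finset.mem_univ i)
          simp only [posOf, negOf] at h1 h2
          simp only [Pi.zero_apply]
          omega
        have hdlt : degOf w < n := by omega
        have hmid := ih (degOf w) hdlt (negOf w) (posOf w)
          (degOf_eq_sum_negOf hA hwmv).symm (mulVec_negOf_eq_posOf hwmv)
        obtain ⟨hle, hu, hv⟩ := step_decomp hstep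
        rw [hu, hv]
        exact accessible_add_left _ hmid
    have hlift : ∀ a b : Fin p → ℕ, Accessible (Bmoves A (n - 1)) a b →
        Accessible Bstar a b := by
      intro a b h
      induction h with
      | refl => exact Relation.ReflTransGen.refl
      | tail _ hbc ihab =>
        refine ihab.trans ?_
        obtain ⟨w, hwB, hdir | hdir⟩ := hbc
        · exact hstep1 _ _ w hwB.1 hwB.2 hdir
        · exact accessible_symm (hstep1 _ _ w hwB.1 hwB.2 (by rw [hdir]; abel))
    intro u v hn hf
    by_cases hacc : Accessible (Bmoves A (n - 1)) u v
    · exact hlift u v hacc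
    · have hsamp : sampleSize A (A.mulVec (natToInt u)) = n := by
        rw [sampleSize_eq hA (show u ∈ fiberOf A (A.mulVec (natToInt u)) from rfl), hn]
      have htM : (A.mulVec (natToInt u)) ∈ MultiT A := by
        refine ⟨u, rfl, v, hf.symm, ?_⟩
        unfold accS
        rw [hsamp]
        exact hacc
      have hto : ∀ a, a ∈ fiberOf A (A.mulVec (natToInt u)) →
          Accessible Bstar a (cent (A.mulVec (natToInt u))) := by
        intro a ha
        by_cases hac : accS A (A.mulVec (natToInt u)) (cent (A.mulVec (natToInt u))) a
        · rw [hcentS _ htM a ha hac]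
          exact Relation.ReflTransGen.refl
        · have hCmem : classSet A (A.mulVec (natToInt u)) a ∈
              Cls A (A.mulVec (natToInt u)) (cent (A.mulVec (natToInt u))) := ⟨a, ha, hac, rfl⟩
          have hr := hrepf _ _ hCmem
          have hzmem := (hmemBstar _).2 ⟨_, htM, classSet A (A.mulVec (natToInt u)) a, hCmem, rfl⟩
          have h1 : Accessible Bstar a
              (repf (A.mulVec (natToInt u)) (classSet A (A.mulVec (natToInt u)) a)) := by
            apply hlift
            have h2 := hr.2
            unfold accS at h2
            rw [hsamp] at h2
            exact h2
          refine h1.trans (Relation.ReflTransGen.single ⟨_, hzmem, Or.inr ?_⟩)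
          abel
      exact (hto u rfl).trans (accessible_symm (hto v hf.symm))
  -- indispensability
  have hindisp : ∀ z ∈ Bstar, IsIndispensableMonomial A (negOf z) := by
    intro z hz
    obtain ⟨t, ht, C, hC, rfl⟩ := (hmemBstar z).1 hz
    obtain ⟨hpos, hneg, hrfib, hnacr⟩ := hparts t ht C hC
    rw [hneg]
    obtain ⟨x₀, hx₀, y₀, hy₀, hnacc₀⟩ := ht
    have hcF := hcentF t (⟨x₀, hx₀, y₀, hy₀, hnacc₀⟩ : t ∈ MultiT A)
    have hcsum : sampleSize A t = ∑ i, cent t i := sampleSize_eq hA hcF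
    obtain ⟨y₁, hy₁F, hy₁n⟩ : ∃ y₁, y₁ ∈ fiberOf A t ∧ ¬ accS A t (cent t) y₁ := by
      by_cases h1 : accS A t (cent t) x₀
      · refine ⟨y₀, hy₀, fun h2 => hnacc₀ ?_⟩
        exact Relation.ReflTransGen.trans (accessible_symm h1) h2
      · exact ⟨x₀, hx₀, h1⟩
    refine indisp_of_singleton (y := y₁) hA ?_ ?_ ?_
    · exact (hy₁F : _ = t).trans (hcF : _ = t).symm
    · intro hcon
      apply hy₁n
      unfold accS
      rw [hcsum]
      exact hcon
    · intro u hu hacc2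
      refine hcentS t (⟨x₀, hx₀, y₀, hy₀, hnacc₀⟩ : t ∈ MultiT A) u ?_ ?_
      · exact (show u ∈ fiberOf A t from hu.trans (hcF : _ = t))
      · unfold accS
        rw [hcsum]
        exact hacc2
  -- minimality
  have hmin : ∀ B' ⊂ Bstar, ¬ IsMarkovBasis A B' := by
    intro B' hB' hMK'
    obtain ⟨w, hwS, hwB'⟩ := Set.exists_of_ssubset hB'
    obtain ⟨t₀, ht₀, C₀, hC₀, hweq⟩ := (hmemBstar w).1 hwS
    obtain ⟨hpos₀, hneg₀, hrfib₀, hnacr₀⟩ := hparts t₀ ht₀ C₀ hC₀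
    have hbase : ¬ accS A t₀ (repf t₀ C₀) (cent t₀) := by
      intro h
      have h2 := hcentS t₀ ht₀ (repf t₀ C₀) hrfib₀ (accessible_symm h)
      rw [h2] at hnacr₀
      exact hnacr₀ Relation.ReflTransGen.refl
    have hinv : ∀ v₁, Accessible (Bstar \ {w}) (cent t₀) v₁ →
        v₁ ∈ fiberOf A t₀ ∧ ¬ accS A t₀ (repf t₀ C₀) v₁ := by
      intro v₁ hv₁
      induction hv₁ with
      | refl => exact ⟨hcentF t₀ ht₀, hbase⟩
      | @tail b c htl hstep ihv =>
        obtain ⟨hbF, hbn⟩ := ihv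
        have hBsub : ∀ z ∈ Bstar \ {w}, IsMove A z := fun z hz => hBmoves z hz.1
        have hsb : ∑ i, b i = sampleSize A t₀ := (sampleSize_eq hA hbF).symm
        have hcF2 : c ∈ fiberOf A t₀ := by
          show A.mulVec (natToInt c) = t₀
          rw [← mstep_mulVec hBsub hstep]
          exact hbF
        rcases mstep_cases hA hBsub hstep hsb with hsm | ⟨z, hzB, hcase⟩
        · refine ⟨hcF2, fun h2 => hbn ?_⟩
          have hsm' : accS A t₀ b c := hsm
          exact Relation.ReflTransGen.trans h2 (accessible_symm hsm')
        · obtain ⟨hz1, hz2⟩ := hzB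
          obtain ⟨t₁, ht₁, C₁, hC₁, hzeq⟩ := (hmemBstar z).1 hz1
          obtain ⟨hpos₁, hneg₁, hrfib₁, hnacr₁⟩ := hparts t₁ ht₁ C₁ hC₁
          rcases hcase with ⟨h1, h2⟩ | ⟨h1, h2⟩
          · -- negOf z = b, posOf z = c : b = cent t₁, c = repf t₁ C₁
            rw [hzeq] at h1 h2
            rw [hneg₁] at h1
            rw [hpos₁] at h2
            have ht10 : t₁ = t₀ := by
              rw [← (hcentF t₁ ht₁ : _ = t₁), h1]
              exact (hbF : _ = t₀)
            subst ht10
            have hCne : C₁ ≠ C₀ := by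
              intro hCC
              apply hz2
              simp only [Set.mem_singleton_iff]
              rw [hzeq, hweq, hCC]
            refine ⟨hcF2, ?_⟩
            rw [← h2]
            intro haccrr
            exact hCne (hclass_eq t₁ C₀ hC₀ C₁ hC₁ haccrr).symm
          · -- posOf z = b, negOf z = c : b = repf t₁ C₁, c = cent t₁
            rw [hzeq] at h1 h2
            rw [hpos₁] at h1
            rw [hneg₁] at h2
            have ht10 : t₁ = t₀ := by
              rw [← (hrfib₁ : _ = t₁), h1]
              exact (hbF : _ = t₀)
            subst ht10
            refine ⟨hcF2, ?_⟩
            rw [← h2]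
            exact hbase
    have hacc' : Accessible B' (cent t₀) (repf t₀ C₀) :=
      hMK'.2.2 t₀ (cent t₀) (hcentF t₀ ht₀) (repf t₀ C₀) hrfib₀
    have hsubw : B' ⊆ Bstar \ {w} := by
      intro z hz
      refine ⟨hB'.subset hz, ?_⟩
      simp only [Set.mem_singleton_iff]
      rintro rfl
      exact hwB' hz
    have hfin := hinv (repf t₀ C₀) (accessible_mono hsubw hacc')
    exact hfin.2 Relation.ReflTransGen.refl
  refine ⟨Bstar, ⟨⟨hBfin, hBmoves, ?_⟩, hmin⟩, fun z hz => Or.inr (hindisp z hz)⟩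
  intro s u hu v hv
  exact hconn (∑ i, u i) u v rfl ((hu : _ = s).trans (hv : _ = s).symm)

end MProof

/-- some minimal Markov basis has every move containing an indispensable
monomial iff every fiber of `B_MF` contains a singleton equivalence class. -/
theorem exists_minimal_basis_with_indispensable_monomials_iff
    {p d : ℕ} (hp : 0 < p) (hd : 0 < d)
    (A : Matrix (Fin d) (Fin p) ℤ) (hA : IsHomogeneousMatrix A) :
    (∃ B : Set (Fin p → ℤ), IsMinimalMarkovBasis A B ∧ ∀ z ∈ B,
        IsIndispensableMonomial A (posOf z) ∨ IsIndispensableMonomial A (negOf z)) ↔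
      ∀ z ∈ BMF A, ∃ C ∈ fiberClasses A (A.mulVec (natToInt (posOf z))),
        ∃ x : Fin p → ℕ, C = {x} := by
  constructor
  · exact MProof.forward_direction hA
  · exact MProof.reverse_direction hA
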